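/- For all x ≥ 0 and v > 0, (v²/(x+v²))^{x+v²}·e^x ≤ exp{−x²/(v²(1+√(1+2x/(3v²))) + x/3)}. -/

import Mathlib

open Real

lemma lemA (u : ℝ) (hu : 0 ≤ u) :
    3 - 3 / Real.sqrt (1 + 2*u/3) ≤ Real.log (1 + u) := by
  set φ : ℝ → ℝ := fun t => Real.log (1+t) + 3 / Real.sqrt (1+2*t/3) with hφ
  have key : ∀ t : ℝ, 0 ≤ t →
      HasDerivAt φ (1/(1+t) - 1/(Real.sqrt (1+2*t/3) * (1+2*t/3))) t := by
    intro t ht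
    have hg : (0:ℝ) < 1 + 2*t/3 := by linarith
    have hs : 0 < Real.sqrt (1+2*t/3) := Real.sqrt_pos.mpr hg
    have hinner : HasDerivAt (fun t : ℝ => 1 + 2*t/3) (2/3) t := by
      have := (((hasDerivAt_id t).const_mul (2:ℝ)).div_const 3).const_add 1
      simpa using this
    have hsqrt : HasDerivAt (fun t : ℝ => Real.sqrt (1+2*t/3))
        ((2/3) / (2 * Real.sqrt (1+2*t/3))) t := hinner.sqrt hg.ne'
    have hlog : HasDerivAt (fun t : ℝ => Real.log (1+t)) (1/(1+t)) t := by
      have h1 : HasDerivAt (fun t : ℝ => 1+t) 1 t := (hasDerivAt_id t).const_add 1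
      simpa using h1.log (by linarith : (1:ℝ)+t ≠ 0)
    have hdiv := (hasDerivAt_const t (3:ℝ)).div hsqrt hs.ne'
    have := hlog.add hdiv
    refine this.congr_deriv ?_
    symm
    have hsq : Real.sqrt (1+2*t/3) ^ 2 = 1+2*t/3 := Real.sq_sqrt hg.le
    rw [hsq]
    field_simp
    ring
  have mono : MonotoneOn φ (Set.Ici (0:ℝ)) := by
    apply monotoneOn_of_deriv_nonneg (convex_Ici 0)
    · exact fun t ht => (key t ht).continuousAt.continuousWithinAt
    · intro t ht
      rw [interior_Ici] at ht
      exact (key t (le_of_lt ht)).differentiableAt.differentiableWithinAt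
    · intro t ht
      rw [interior_Ici] at ht
      have ht' : (0:ℝ) ≤ t := le_of_lt ht
      rw [(key t ht').deriv]
      have hg : (0:ℝ) < 1 + 2*t/3 := by linarith
      have hs : 0 < Real.sqrt (1+2*t/3) := Real.sqrt_pos.mpr hg
      have hsq : Real.sqrt (1+2*t/3) ^ 2 = 1+2*t/3 := Real.sq_sqrt hg.le
      have h1 : (1+t) ≤ Real.sqrt (1+2*t/3) * (1+2*t/3) := by
        nlinarith [mul_pos hs hg, sq_nonneg (Real.sqrt (1+2*t/3) * (1+2*t/3) - (1+t)), sq_nonneg t]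
      have h2 : 1/(Real.sqrt (1+2*t/3) * (1+2*t/3)) ≤ 1/(1+t) :=
        one_div_le_one_div_of_le (by linarith) h1
      linarith
  have h0 : φ 0 = 3 := by simp [hφ]
  have := mono (Set.mem_Ici.mpr le_rfl) (Set.mem_Ici.mpr hu) hu
  rw [h0] at this
  have : 3 ≤ Real.log (1+u) + 3 / Real.sqrt (1+2*u/3) := this
  linarith

lemma lemB (u : ℝ) (hu : 0 ≤ u) :
    (9/2) * (Real.sqrt (1 + 2*u/3) - 1)^2 ≤ (1+u) * Real.log (1+u) - u := by
  set ψ : ℝ → ℝ := fun t => (1+t) * Real.log (1+t) - t - (9/2) * (Real.sqrt (1+2*t/3) - 1)^2 with hψ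
  have key : ∀ t : ℝ, 0 ≤ t →
      HasDerivAt ψ (Real.log (1+t) - (3 - 3 / Real.sqrt (1+2*t/3))) t := by
    intro t ht
    have hg : (0:ℝ) < 1 + 2*t/3 := by linarith
    have hs : 0 < Real.sqrt (1+2*t/3) := Real.sqrt_pos.mpr hg
    have hinner : HasDerivAt (fun t : ℝ => 1 + 2*t/3) (2/3) t := by
      have := (((hasDerivAt_id t).const_mul (2:ℝ)).div_const 3).const_add 1
      simpa using this
    have hsqrt : HasDerivAt (fun t : ℝ => Real.sqrt (1+2*t/3))
        ((2/3) / (2 * Real.sqrt (1+2*t/3))) t := hinner.sqrt hg.ne'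
    have h1t : HasDerivAt (fun t : ℝ => 1+t) 1 t := (hasDerivAt_id t).const_add 1
    have hlog : HasDerivAt (fun t : ℝ => Real.log (1+t)) (1/(1+t)) t := by
      simpa using h1t.log (by linarith : (1:ℝ)+t ≠ 0)
    have hmul := h1t.mul hlog
    have hsub1 := hsqrt.sub_const 1
    have hpow := hsub1.pow 2
    have hsqr := hpow.const_mul ((9:ℝ)/2)
    have htot := (hmul.sub (hasDerivAt_id t)).sub hsqr
    refine htot.congr_deriv ?_
    symm
    have hsq : Real.sqrt (1+2*t/3) ^ 2 = 1+2*t/3 := Real.sq_sqrt hg.le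
    have h1t' : (1:ℝ)+t ≠ 0 := by linarith
    field_simp
    ring
  have mono : MonotoneOn ψ (Set.Ici (0:ℝ)) := by
    apply monotoneOn_of_deriv_nonneg (convex_Ici 0)
    · exact fun t ht => (key t ht).continuousAt.continuousWithinAt
    · intro t ht
      rw [interior_Ici] at ht
      exact (key t (le_of_lt ht)).differentiableAt.differentiableWithinAt
    · intro t ht
      rw [interior_Ici] at ht
      have ht' : (0:ℝ) ≤ t := le_of_lt ht
      rw [(key t ht').deriv]
      have := lemA t ht'
      linarith
  have h0 : ψ 0 = 0 := by simp [hψ]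
  have := mono (Set.mem_Ici.mpr le_rfl) (Set.mem_Ici.mpr hu) hu
  rw [h0] at this
  have : (0:ℝ) ≤ (1+u) * Real.log (1+u) - u - (9/2) * (Real.sqrt (1+2*u/3) - 1)^2 := this
  linarith

theorem F_le_B1 (x v : ℝ) (hx : 0 ≤ x) (hv : 0 < v) :
    (v^2/(x+v^2)) ^ (x+v^2) * Real.exp x
      ≤ Real.exp (-(x^2 / (v^2 * (1 + Real.sqrt (1 + 2*x/(3*v^2))) + x/3))) := by
  have hv2 : (0:ℝ) < v^2 := by positivity
  have hxv : (0:ℝ) < x + v^2 := by linarith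
  have hbase : (0:ℝ) < v^2/(x+v^2) := by positivity
  set u : ℝ := x / v^2 with hu
  have hu0 : 0 ≤ u := by positivity
  have hxu : x = u * v^2 := by rw [hu, div_mul_cancel₀ x hv2.ne']
  have harg : 1 + 2*x/(3*v^2) = 1 + 2*u/3 := by rw [hxu]; field_simp
  set s : ℝ := Real.sqrt (1 + 2*u/3) with hs
  have hg : (0:ℝ) < 1 + 2*u/3 := by linarith
  have hspos : 0 < s := Real.sqrt_pos.mpr hg
  have hssq : s^2 = 1 + 2*u/3 := Real.sq_sqrt hg.le
  -- rewrite LHS as exp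
  rw [Real.rpow_def_of_pos hbase, ← Real.exp_add, Real.exp_le_exp]
  rw [harg]
  -- log term
  have hlogeq : Real.log (v^2/(x+v^2)) = - Real.log (1+u) := by
    rw [← Real.log_inv]
    congr 1
    rw [hxu]
    field_simp
    ring
  rw [hlogeq]
  -- denominator identity
  have hD : v^2 * (1 + s) + x/3 = v^2 * (1 + s + u/3) := by
    rw [hxu]; ring
  rw [hD]
  have hDpos : (0:ℝ) < v^2 * (1 + s + u/3) := by positivity
  have hfrac : x^2 / (v^2 * (1 + s + u/3)) = (9/2) * v^2 * (s-1)^2 := by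
    rw [hxu]
    have hu2 : u = 3*(s^2-1)/2 := by linarith [hssq]
    rw [div_eq_iff hDpos.ne', hu2]
    ring
  rw [hfrac]
  have hB := lemB u hu0
  rw [hxu]
  nlinarith [hB, hv2.le, mul_le_mul_of_nonneg_left hB hv2.le]
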